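/- Let G be a map from p×p real matrices to symmetric p×p real matrices that is L-Lipschitz in Frobenius norm on positive semidefinite matrices. Let U, U_r^* ∈ ℝ^{p×r}, let σ > 0 satisfy ‖U_r^* x‖₂ ≥ σ‖x‖₂ for all x ∈ ℝ^r, let X = UUᵀ and X_r^* = U_r^*(U_r^*)ᵀ, let τ(U_r^*) := ‖U_r^*‖₂/σ, and let γ₀ ∈ (0,1) with ‖U − U_r^*‖_F² < γ₀σ². Define η̄ := min{(1 − √γ₀)² / (‖G(X_r^*)‖_F/(Lσ²) + (2√γ₀ + γ₀)τ(U_r^*)), 1}, and let P_U be the orthogonal projection onto the column space of U. Then the matrix X̄ := X − (η̄/L)·P_U·G(X)·P_U is symmetric positive semidefinite. -/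

import Mathlib

open Matrix BigOperators

/-- Euclidean norm of a real vector. -/
noncomputable def vnorm {n : ℕ} (x : Fin n → ℝ) : ℝ :=
  Real.sqrt (∑ i, x i ^ 2)

/-- Frobenius norm of a real matrix. -/
noncomputable def frob {m n : ℕ} (A : Matrix (Fin m) (Fin n) ℝ) : ℝ :=
  Real.sqrt (∑ i, ∑ j, A i j ^ 2)

/-- Spectral (operator `ℓ₂`) norm of a real matrix. -/
noncomputable def specNorm {m n : ℕ} (A : Matrix (Fin m) (Fin n) ℝ) : ℝ :=
  sInf {c : ℝ | 0 ≤ c ∧ ∀ x, vnorm (A *ᵥ x) ≤ c * vnorm x}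

/-- `P` is the orthogonal projection onto the column space of `U`: the symmetric,
idempotent matrix fixing `U` whose range is contained in (hence equal to) the column
space of `U`. -/
def IsColProj {p r : ℕ} (U : Matrix (Fin p) (Fin r) ℝ)
    (P : Matrix (Fin p) (Fin p) ℝ) : Prop :=
  Pᵀ = P ∧ P * P = P ∧ P * U = U ∧
    ∀ y : Fin p → ℝ, (∃ w, P *ᵥ w = y) → ∃ c : Fin r → ℝ, U *ᵥ c = y


section Helpers
open Finset

lemma vnorm_nonneg {n : ℕ} (x : Fin n → ℝ) : 0 ≤ vnorm x := Real.sqrt_nonneg _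

lemma vnorm_sq {n : ℕ} (x : Fin n → ℝ) : vnorm x ^ 2 = ∑ i, x i ^ 2 :=
  Real.sq_sqrt (by positivity)

lemma vnorm_eq_zero {n : ℕ} {x : Fin n → ℝ} (h : vnorm x = 0) : x = 0 := by
  have h2 : (∑ i, x i ^ 2) = 0 := by
    have := vnorm_sq x; rw [h] at this; simpa using this.symm
  funext i
  have := (Finset.sum_eq_zero_iff_of_nonneg (fun i _ => sq_nonneg (x i))).1 h2 i (by simp)
  exact pow_eq_zero_iff (by norm_num) |>.1 this

lemma dot_le_vnorm {n : ℕ} (x y : Fin n → ℝ) : x ⬝ᵥ y ≤ vnorm x * vnorm y := by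
  simpa [dotProduct, vnorm] using Real.sum_mul_le_sqrt_mul_sqrt Finset.univ x y

lemma vnorm_add_le {n : ℕ} (x y : Fin n → ℝ) : vnorm (x + y) ≤ vnorm x + vnorm y := by
  have hx := vnorm_nonneg x
  have hy := vnorm_nonneg y
  have hcs := dot_le_vnorm x y
  have hsq : vnorm (x + y) ^ 2 ≤ (vnorm x + vnorm y) ^ 2 := by
    rw [vnorm_sq]
    have : ∑ i, (x + y) i ^ 2 = (∑ i, x i ^ 2) + 2 * (x ⬝ᵥ y) + ∑ i, y i ^ 2 := by
      simp only [Pi.add_apply, dotProduct, Finset.mul_sum, ← Finset.sum_add_distrib]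
      apply Finset.sum_congr rfl; intro i _; ring
    rw [this, ← vnorm_sq x, ← vnorm_sq y]
    nlinarith
  nlinarith [vnorm_nonneg (x + y)]


lemma frob_nonneg {m n : ℕ} (A : Matrix (Fin m) (Fin n) ℝ) : 0 ≤ frob A := Real.sqrt_nonneg _

lemma frob_sq {m n : ℕ} (A : Matrix (Fin m) (Fin n) ℝ) : frob A ^ 2 = ∑ i, ∑ j, A i j ^ 2 :=
  Real.sq_sqrt (by positivity)

lemma frob_transpose {m n : ℕ} (A : Matrix (Fin m) (Fin n) ℝ) : frob Aᵀ = frob A := by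
  unfold frob
  rw [Finset.sum_comm]
  rfl

lemma frob_neg_sub {m n : ℕ} (A B : Matrix (Fin m) (Fin n) ℝ) : frob (A - B) = frob (B - A) := by
  unfold frob
  congr 1
  apply Finset.sum_congr rfl; intro i _
  apply Finset.sum_congr rfl; intro j _
  simp [Matrix.sub_apply]; ring

lemma frob_add_le {m n : ℕ} (A B : Matrix (Fin m) (Fin n) ℝ) :
    frob (A + B) ≤ frob A + frob B := by
  -- reduce to vectors over the product type
  have key : ∀ (C : Matrix (Fin m) (Fin n) ℝ),
      frob C = vnorm (fun q : Fin (m * n) => C ((finProdFinEquiv.symm q).1) ((finProdFinEquiv.symm q).2)) := by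
    intro C
    unfold frob vnorm
    congr 1
    rw [← Finset.sum_product']
    rw [show (Finset.univ ×ˢ Finset.univ : Finset (Fin m × Fin n)) = Finset.univ from rfl,
      ← Equiv.sum_comp finProdFinEquiv.symm (fun q : Fin m × Fin n => C q.1 q.2 ^ 2)]
  rw [key, key, key]
  have := vnorm_add_le (fun q : Fin (m * n) => A ((finProdFinEquiv.symm q).1) ((finProdFinEquiv.symm q).2))
    (fun q : Fin (m * n) => B ((finProdFinEquiv.symm q).1) ((finProdFinEquiv.symm q).2))
  exact this

lemma sq_le_of_nonneg {a b : ℝ} (hb : 0 ≤ b) (h : a ^ 2 ≤ b ^ 2) (ha : 0 ≤ a) : a ≤ b := by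
  nlinarith

lemma vnorm_mulVec_le_frob {m n : ℕ} (A : Matrix (Fin m) (Fin n) ℝ) (x : Fin n → ℝ) :
    vnorm (A *ᵥ x) ≤ frob A * vnorm x := by
  have hsq : vnorm (A *ᵥ x) ^ 2 ≤ (frob A * vnorm x) ^ 2 := by
    rw [vnorm_sq, mul_pow, frob_sq, vnorm_sq]
    rw [Finset.sum_mul]
    apply Finset.sum_le_sum
    intro i _
    simpa [Matrix.mulVec, dotProduct] using
      Finset.sum_mul_sq_le_sq_mul_sq Finset.univ (fun j => A i j) x
  exact sq_le_of_nonneg (mul_nonneg (frob_nonneg A) (vnorm_nonneg x)) hsq (vnorm_nonneg _)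


lemma frob_mem_specSet {m n : ℕ} (A : Matrix (Fin m) (Fin n) ℝ) :
    frob A ∈ {c : ℝ | 0 ≤ c ∧ ∀ x, vnorm (A *ᵥ x) ≤ c * vnorm x} :=
  ⟨frob_nonneg A, vnorm_mulVec_le_frob A⟩

lemma specSet_bddBelow {m n : ℕ} (A : Matrix (Fin m) (Fin n) ℝ) :
    BddBelow {c : ℝ | 0 ≤ c ∧ ∀ x, vnorm (A *ᵥ x) ≤ c * vnorm x} :=
  ⟨0, fun c hc => hc.1⟩

lemma specNorm_nonneg {m n : ℕ} (A : Matrix (Fin m) (Fin n) ℝ) : 0 ≤ specNorm A :=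
  le_csInf ⟨frob A, frob_mem_specSet A⟩ (fun c hc => hc.1)

lemma specNorm_le_of_mem {m n : ℕ} {A : Matrix (Fin m) (Fin n) ℝ} {c : ℝ}
    (hc : 0 ≤ c) (h : ∀ x, vnorm (A *ᵥ x) ≤ c * vnorm x) : specNorm A ≤ c :=
  csInf_le (specSet_bddBelow A) ⟨hc, h⟩

lemma specNorm_le_frob {m n : ℕ} (A : Matrix (Fin m) (Fin n) ℝ) : specNorm A ≤ frob A :=
  csInf_le (specSet_bddBelow A) (frob_mem_specSet A)

lemma specNorm_bound {m n : ℕ} (A : Matrix (Fin m) (Fin n) ℝ) (x : Fin n → ℝ) :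
    vnorm (A *ᵥ x) ≤ specNorm A * vnorm x := by
  rcases eq_or_lt_of_le (vnorm_nonneg x) with h | h
  · have hx : x = 0 := vnorm_eq_zero h.symm
    subst hx
    simp [Matrix.mulVec_zero, ← h]
    have : vnorm (0 : Fin m → ℝ) = 0 := by simp [vnorm]
    simp [this]
  · rw [← div_le_iff₀ h] at *
    apply le_csInf ⟨frob A, frob_mem_specSet A⟩
    intro c hc
    rw [div_le_iff₀ h]
    exact hc.2 x

lemma specNorm_add_le {m n : ℕ} (A B : Matrix (Fin m) (Fin n) ℝ) :
    specNorm (A + B) ≤ specNorm A + specNorm B := by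
  apply specNorm_le_of_mem (add_nonneg (specNorm_nonneg A) (specNorm_nonneg B))
  intro x
  rw [Matrix.add_mulVec]
  calc vnorm (A *ᵥ x + B *ᵥ x) ≤ vnorm (A *ᵥ x) + vnorm (B *ᵥ x) := vnorm_add_le _ _
    _ ≤ specNorm A * vnorm x + specNorm B * vnorm x := by
        exact add_le_add (specNorm_bound A x) (specNorm_bound B x)
    _ = (specNorm A + specNorm B) * vnorm x := by ring

lemma frob_mul_le {m n k : ℕ} (A : Matrix (Fin m) (Fin n) ℝ) (B : Matrix (Fin n) (Fin k) ℝ) :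
    frob (A * B) ≤ specNorm A * frob B := by
  have hsq : frob (A * B) ^ 2 ≤ (specNorm A * frob B) ^ 2 := by
    have hB : frob B ^ 2 = ∑ j, ∑ i, B i j ^ 2 := by rw [frob_sq]; exact Finset.sum_comm
    have hAB : frob (A * B) ^ 2 = ∑ j, ∑ i, (A * B) i j ^ 2 := by
      rw [frob_sq]; exact Finset.sum_comm
    rw [hAB, mul_pow, hB, Finset.mul_sum]
    apply Finset.sum_le_sum
    intro j _
    have h1 : ∑ i, (A * B) i j ^ 2 = vnorm (A *ᵥ (fun l => B l j)) ^ 2 := by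
      rw [vnorm_sq]
      apply Finset.sum_congr rfl
      intro i _
      simp [Matrix.mul_apply, Matrix.mulVec, dotProduct]
    rw [h1]
    have h2 := specNorm_bound A (fun l => B l j)
    have h3 : vnorm (fun l => B l j) ^ 2 = ∑ i, B i j ^ 2 := vnorm_sq _
    nlinarith [vnorm_nonneg (A *ᵥ fun l => B l j), specNorm_nonneg A,
      vnorm_nonneg (fun l => B l j)]
  exact sq_le_of_nonneg (mul_nonneg (specNorm_nonneg A) (frob_nonneg B)) hsq (frob_nonneg _)

lemma dot_self_eq_vnorm_sq {n : ℕ} (x : Fin n → ℝ) : x ⬝ᵥ x = vnorm x ^ 2 := by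
  rw [vnorm_sq]; simp [dotProduct, sq]

lemma vnorm_zero {n : ℕ} : vnorm (0 : Fin n → ℝ) = 0 := by simp [vnorm]


end Helpers

set_option maxHeartbeats 2000000 in
/-- feasibility of `X̄`: under the hypotheses of the bounded-gradient
lemma, with `η̄ = min{(1 − √γ₀)²/(‖G(X_r^*)‖_F/(Lσ²) + (2√γ₀ + γ₀)τ(U_r^*)), 1}` and
`P_U` the orthogonal projection onto the column space of `U`, the matrix
`X̄ = X − (η̄/L)·P_U·G(X)·P_U` is symmetric positive semidefinite. -/
theorem feasibility_of_projected_step {p r : ℕ} (L σ γ₀ ebar : ℝ)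
    (G : Matrix (Fin p) (Fin p) ℝ → Matrix (Fin p) (Fin p) ℝ)
    (hGsym : ∀ X, (G X)ᵀ = G X)
    (hlip : ∀ X Y : Matrix (Fin p) (Fin p) ℝ, X.PosSemidef → Y.PosSemidef →
      frob (G X - G Y) ≤ L * frob (X - Y))
    (hL : 0 < L)
    (U Ur : Matrix (Fin p) (Fin r) ℝ) (P : Matrix (Fin p) (Fin p) ℝ)
    (hP : IsColProj U P)
    (hσ : 0 < σ) (hUr : ∀ x : Fin r → ℝ, σ * vnorm x ≤ vnorm (Ur *ᵥ x))
    (hγ₀0 : 0 < γ₀) (hγ₀1 : γ₀ < 1)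
    (hclose : frob (U - Ur) ^ 2 < γ₀ * σ ^ 2)
    (hebar : ebar = min ((1 - Real.sqrt γ₀) ^ 2 /
      (frob (G (Ur * Urᵀ)) / (L * σ ^ 2) + (2 * Real.sqrt γ₀ + γ₀) * (specNorm Ur / σ))) 1) :
    (U * Uᵀ - (ebar / L) • (P * G (U * Uᵀ) * P)).PosSemidef := by
  obtain ⟨hPsym, hPP, hPU, hPrange⟩ := hP
  have hconj : ∀ {a b : ℕ} (M : Matrix (Fin a) (Fin b) ℝ), Mᴴ = Mᵀ := by
    intro a b M; ext i j; simp [Matrix.conjTranspose_apply]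
  set X := U * Uᵀ with hXdef
  set Xs := Ur * Urᵀ with hXsdef
  have hXpsd : X.PosSemidef := by
    have := Matrix.posSemidef_self_mul_conjTranspose U
    rwa [hconj U] at this
  have hXspsd : Xs.PosSemidef := by
    have := Matrix.posSemidef_self_mul_conjTranspose Ur
    rwa [hconj Ur] at this
  set g := Real.sqrt γ₀ with hgdef
  have hg0 : 0 < g := Real.sqrt_pos.2 hγ₀0
  have hg1 : g < 1 := by
    rw [hgdef, show (1:ℝ) = Real.sqrt 1 by simp]
    exact Real.sqrt_lt_sqrt hγ₀0.le hγ₀1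
  have hgsq : g ^ 2 = γ₀ := Real.sq_sqrt hγ₀0.le
  set δ := frob (U - Ur) with hδdef
  have hδ0 : 0 ≤ δ := frob_nonneg _
  have hδ : δ ≤ g * σ := by
    nlinarith [hclose, hgsq, mul_pos hg0 hσ, hδ0, sq_nonneg (δ - g * σ)]
  -- spectral norm bounds
  have hspecUr0 : 0 ≤ specNorm Ur := specNorm_nonneg Ur
  have hspecU : specNorm U ≤ specNorm Ur + δ := by
    have h1 : U = Ur + (U - Ur) := by abel
    calc specNorm U = specNorm (Ur + (U - Ur)) := by rw [← h1]
      _ ≤ specNorm Ur + specNorm (U - Ur) := specNorm_add_le _ _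
      _ ≤ specNorm Ur + δ := by have := specNorm_le_frob (U - Ur); linarith
  have hXXs : frob (X - Xs) ≤ δ * (specNorm U + specNorm Ur) := by
    have hdecomp : X - Xs = (U - Ur) * Uᵀ + Ur * (U - Ur)ᵀ := by
      rw [hXdef, hXsdef, Matrix.transpose_sub, Matrix.sub_mul, Matrix.mul_sub]
      abel
    have h1 : frob ((U - Ur) * Uᵀ) ≤ specNorm U * δ := by
      have e1 : frob ((U - Ur) * Uᵀ) = frob (U * (U - Ur)ᵀ) := by
        rw [← frob_transpose ((U - Ur) * Uᵀ), Matrix.transpose_mul, Matrix.transpose_transpose]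
      rw [e1]
      calc frob (U * (U - Ur)ᵀ) ≤ specNorm U * frob ((U - Ur)ᵀ) := frob_mul_le _ _
        _ = specNorm U * δ := by rw [frob_transpose]
    have h2 : frob (Ur * (U - Ur)ᵀ) ≤ specNorm Ur * δ := by
      calc frob (Ur * (U - Ur)ᵀ) ≤ specNorm Ur * frob ((U - Ur)ᵀ) := frob_mul_le _ _
        _ = specNorm Ur * δ := by rw [frob_transpose]
    calc frob (X - Xs) = frob ((U - Ur) * Uᵀ + Ur * (U - Ur)ᵀ) := by rw [hdecomp]
      _ ≤ frob ((U - Ur) * Uᵀ) + frob (Ur * (U - Ur)ᵀ) := frob_add_le _ _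
      _ ≤ specNorm U * δ + specNorm Ur * δ := add_le_add h1 h2
      _ = δ * (specNorm U + specNorm Ur) := by ring
  have hGX : frob (G X) ≤ frob (G Xs) + L * (δ * (specNorm U + specNorm Ur)) := by
    have h1 := hlip X Xs hXpsd hXspsd
    have h2 : frob (G X) ≤ frob (G Xs) + frob (G X - G Xs) := by
      have h3 := frob_add_le (G Xs) (G X - G Xs)
      have he : G Xs + (G X - G Xs) = G X := by abel
      rw [he] at h3; exact h3
    have h4 := mul_le_mul_of_nonneg_left hXXs hL.le
    linarith
  have hGX0 : 0 ≤ frob (G X) := frob_nonneg _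
  have hGXs0 : 0 ≤ frob (G Xs) := frob_nonneg _
  -- symmetry
  have hQsym : (P * G X * P)ᵀ = P * G X * P := by
    rw [Matrix.transpose_mul, Matrix.transpose_mul, hPsym, hGsym, ← Matrix.mul_assoc]
  have hXsym : Xᵀ = X := by rw [hXdef, Matrix.transpose_mul, Matrix.transpose_transpose]
  rw [Matrix.posSemidef_iff_dotProduct_mulVec]
  constructor
  · show _ᴴ = _
    rw [hconj, Matrix.transpose_sub, Matrix.transpose_smul, hQsym, hXsym]
  · intro v
    have hstar : star v = v := by funext i; simp
    rw [hstar]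
    set y := P *ᵥ v with hydef
    -- rewrite the quadratic form
    have hUtP : Uᵀ * P = Uᵀ := by
      have h := congrArg Matrix.transpose hPU
      rwa [Matrix.transpose_mul, hPsym] at h
    have hterm1 : v ⬝ᵥ (X *ᵥ v) = vnorm (Uᵀ *ᵥ y) ^ 2 := by
      have e0 : Uᵀ *ᵥ y = Uᵀ *ᵥ v := by
        rw [hydef, Matrix.mulVec_mulVec, hUtP]
      rw [hXdef, ← Matrix.mulVec_mulVec, Matrix.dotProduct_mulVec, ← Matrix.mulVec_transpose,
        e0, dot_self_eq_vnorm_sq]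
    have hterm2 : v ⬝ᵥ ((P * G X * P) *ᵥ v) = y ⬝ᵥ (G X *ᵥ y) := by
      rw [← Matrix.mulVec_mulVec, ← Matrix.mulVec_mulVec, Matrix.dotProduct_mulVec,
        ← Matrix.mulVec_transpose, hPsym]
    have hquad : v ⬝ᵥ ((X - (ebar / L) • (P * G X * P)) *ᵥ v)
        = vnorm (Uᵀ *ᵥ y) ^ 2 - (ebar / L) * (y ⬝ᵥ (G X *ᵥ y)) := by
      rw [Matrix.sub_mulVec, dotProduct_sub, Matrix.smul_mulVec, dotProduct_smul,
        hterm1, hterm2]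
      simp
    rw [hquad]
    rcases eq_or_lt_of_le (vnorm_nonneg y) with hy0 | hvy
    · have : y = 0 := vnorm_eq_zero hy0.symm
      rw [this]
      simp [zero_dotProduct]
      positivity
    · -- main branch
      obtain ⟨w, hw⟩ := hPrange y ⟨v, rfl⟩
      have hvw : 0 < vnorm w := by
        rcases eq_or_lt_of_le (vnorm_nonneg w) with hw0 | h
        · exfalso
          have : w = 0 := vnorm_eq_zero hw0.symm
          rw [this, Matrix.mulVec_zero] at hw
          rw [← hw, vnorm_zero] at hvy
          exact lt_irrefl _ hvy
        · exact h
      have hσspec : σ ≤ specNorm Ur := by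
        have h1 := hUr w
        have h2 := specNorm_bound Ur w
        exact le_of_mul_le_mul_right (h1.trans h2) hvw
      -- lower bound on vnorm (Uᵀ *ᵥ y)
      have hUlowW : (1 - g) * σ * vnorm w ≤ vnorm (U *ᵥ w) := by
        have t1 := hUr w
        have t2 : vnorm (Ur *ᵥ w) ≤ vnorm (U *ᵥ w) + δ * vnorm w := by
          have e : Ur *ᵥ w = U *ᵥ w + (Ur - U) *ᵥ w := by
            rw [Matrix.sub_mulVec]; abel
          rw [e]
          have h3 := vnorm_add_le (U *ᵥ w) ((Ur - U) *ᵥ w)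
          have h4 := vnorm_mulVec_le_frob (Ur - U) w
          have h5 : frob (Ur - U) = δ := frob_neg_sub Ur U
          rw [h5] at h4
          linarith
        nlinarith [vnorm_nonneg w]
      have hcs : vnorm y ^ 2 ≤ vnorm (Uᵀ *ᵥ y) * vnorm w := by
        have e1 : vnorm y ^ 2 = y ⬝ᵥ (U *ᵥ w) := by
          rw [hw, dot_self_eq_vnorm_sq]
        rw [e1, Matrix.dotProduct_mulVec, ← Matrix.mulVec_transpose]
        exact dot_le_vnorm _ _
      have hUy : vnorm (U *ᵥ w) = vnorm y := by rw [hw]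
      have hUtlow : (1 - g) * σ * vnorm y ≤ vnorm (Uᵀ *ᵥ y) := by
        rw [hUy] at hUlowW
        have e2 := mul_le_mul_of_nonneg_right hUlowW hvy.le
        have e3 : ((1 - g) * σ * vnorm y) * vnorm w ≤ vnorm (Uᵀ *ᵥ y) * vnorm w := by
          nlinarith [hcs]
        exact le_of_mul_le_mul_right e3 hvw
      -- scalar inequalities on ebar
      obtain ⟨D, hDdef⟩ : ∃ D,
          D = frob (G Xs) / (L * σ ^ 2) + (2 * g + γ₀) * (specNorm Ur / σ) := ⟨_, rfl⟩
      rw [← hDdef] at hebar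
      have hD : 0 < D := by
        rw [hDdef]
        have h1 : 0 ≤ frob (G Xs) / (L * σ ^ 2) := by positivity
        have h2 : (0:ℝ) < (2 * g + γ₀) * (specNorm Ur / σ) := by
          apply mul_pos (by linarith) (div_pos (lt_of_lt_of_le hσ hσspec) hσ)
        linarith
      have hebar0 : 0 ≤ ebar := by
        rw [hebar]
        exact le_min (div_nonneg (sq_nonneg _) hD.le) one_pos.le
      have hebarD : ebar * D ≤ (1 - g) ^ 2 := by
        have h1 : ebar ≤ (1 - g) ^ 2 / D := by rw [hebar]; exact min_le_left _ _
        calc ebar * D ≤ ((1 - g) ^ 2 / D) * D := mul_le_mul_of_nonneg_right h1 hD.le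
          _ = (1 - g) ^ 2 := div_mul_cancel₀ _ hD.ne'
      have hGXle : frob (G X) ≤ L * σ ^ 2 * D := by
        have hLD : L * σ ^ 2 * D = frob (G Xs) + L * σ * ((2 * g + γ₀) * specNorm Ur) := by
          rw [hDdef]
          field_simp
        rw [hLD]
        have hkey2 : δ * (specNorm U + specNorm Ur) ≤ σ * ((2 * g + γ₀) * specNorm Ur) := by
          have a1 : specNorm U + specNorm Ur ≤ 2 * specNorm Ur + g * σ := by linarith
          have a2 : δ * (specNorm U + specNorm Ur) ≤ (g * σ) * (2 * specNorm Ur + g * σ) := by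
            apply mul_le_mul hδ a1 _ (by positivity)
            have := specNorm_nonneg U
            linarith
          have a3 : (g * σ) * (2 * specNorm Ur + g * σ) = 2 * g * σ * specNorm Ur + γ₀ * σ ^ 2 := by
            rw [← hgsq]; ring
          have a4 : γ₀ * σ ^ 2 ≤ (γ₀ * σ) * specNorm Ur := by
            have : (γ₀ * σ) * σ ≤ (γ₀ * σ) * specNorm Ur :=
              mul_le_mul_of_nonneg_left hσspec (by positivity)
            nlinarith
          have a5 : σ * ((2 * g + γ₀) * specNorm Ur)
              = 2 * g * σ * specNorm Ur + (γ₀ * σ) * specNorm Ur := by ring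
          linarith
        have a6 : L * (δ * (specNorm U + specNorm Ur))
            ≤ L * (σ * ((2 * g + γ₀) * specNorm Ur)) :=
          mul_le_mul_of_nonneg_left hkey2 hL.le
        linarith
      have hkey : (ebar / L) * frob (G X) ≤ ((1 - g) * σ) ^ 2 := by
        have h1 : (ebar / L) * frob (G X) ≤ (ebar / L) * (L * σ ^ 2 * D) := by
          apply mul_le_mul_of_nonneg_left hGXle (by positivity)
        have h2 : (ebar / L) * (L * σ ^ 2 * D) = (ebar * D) * σ ^ 2 := by
          field_simp
        have h3 : (ebar * D) * σ ^ 2 ≤ (1 - g) ^ 2 * σ ^ 2 := by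
          apply mul_le_mul_of_nonneg_right hebarD (sq_nonneg σ)
        calc (ebar / L) * frob (G X) ≤ (ebar * D) * σ ^ 2 := by rw [← h2]; exact h1
          _ ≤ (1 - g) ^ 2 * σ ^ 2 := h3
          _ = ((1 - g) * σ) ^ 2 := by ring
      -- final assembly
      have hGq : y ⬝ᵥ (G X *ᵥ y) ≤ frob (G X) * vnorm y ^ 2 := by
        have h1 := dot_le_vnorm y (G X *ᵥ y)
        have h2 := vnorm_mulVec_le_frob (G X) y
        nlinarith [vnorm_nonneg y]
      have hsq : ((1 - g) * σ) ^ 2 * vnorm y ^ 2 ≤ vnorm (Uᵀ *ᵥ y) ^ 2 := by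
        nlinarith [vnorm_nonneg (Uᵀ *ᵥ y), hvy.le, mul_nonneg (mul_nonneg (by linarith : (0:ℝ) ≤ 1 - g) hσ.le) hvy.le]
      have hc0 : 0 ≤ ebar / L := by positivity
      nlinarith [mul_le_mul_of_nonneg_right hkey (sq_nonneg (vnorm y)),
        mul_le_mul_of_nonneg_left hGq hc0]
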